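/- For integers 0 ≤ r ≤ n, one has q^{(n-r)r}·[n choose r]_{q,π} = Σ_{s=0}^{r} (πq²)^{(n-r)(r-s)} · q^{(n-r-1)s} · [n-r+s-1 choose s]_{q,π}. -/

import Mathlib

open scoped Classical

noncomputable section

/-- A concrete model of the ring `ℚ(q)^π := ℚ(q)[π]/(π² - 1)`: since `2` is
invertible, the Chinese Remainder Theorem (evaluating `π` at `±1`) identifies it
with `ℚ(q) × ℚ(q)`, with `q = (q, q)` and `π = (1, -1)`. -/
abbrev Rqpi : Type := RatFunc ℚ × RatFunc ℚ

/-- The element `q` of `ℚ(q)^π`. -/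
def qv : Rqpi := (RatFunc.X, RatFunc.X)

/-- The element `π` of `ℚ(q)^π`. -/
def piv : Rqpi := (1, -1)

/-- The `(q,π)`-integer `[n]_{q,π} = ((πq)^n - q^{-n}) / (πq - q^{-1})`. -/
def qint (n : ℤ) : Rqpi :=
  ((piv * qv) ^ n - qv ^ (-n)) / (piv * qv - qv ^ (-1 : ℤ))

/-- The `(q,π)`-factorial `[n]!_{q,π} = [n]_{q,π} [n-1]_{q,π} ⋯ [1]_{q,π}`. -/
def qfact (n : ℕ) : Rqpi := ∏ i ∈ Finset.range n, qint ((i : ℤ) + 1)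

/-- The `(q,π)`-binomial coefficient
`[n choose r]_{q,π} = [n]_{q,π} [n-1]_{q,π} ⋯ [n-r+1]_{q,π} / [r]!_{q,π}`,
with the convention that it is `0` for `r < 0`. -/
def qbinom (n r : ℤ) : Rqpi :=
  if r < 0 then 0
  else (∏ i ∈ Finset.range r.toNat, qint (n - (i : ℤ))) / qfact r.toNat

namespace St6

abbrev t : RatFunc ℚ := RatFunc.X

lemma ht0 : t ≠ 0 := RatFunc.X_ne_zero

lemma t_pow_ne (m : ℕ) (hm : 0 < m) (c : ℚ) : t ^ m ≠ algebraMap ℚ (RatFunc ℚ) c := by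
  intro h
  have h2 : algebraMap (Polynomial ℚ) (RatFunc ℚ) (Polynomial.X ^ m - Polynomial.C c) = 0 := by
    push_cast [map_sub, map_pow, RatFunc.algebraMap_X]
    rw [sub_eq_zero, h]
    simp [RatFunc.algebraMap_C]
  exact RatFunc.algebraMap_ne_zero (Polynomial.X_pow_sub_C_ne_zero hm c) h2

lemma t_pow_ne_one (m : ℕ) (hm : 0 < m) : t ^ m ≠ 1 := by
  simpa using t_pow_ne m hm 1

lemma t_pow_ne_neg_one (m : ℕ) (hm : 0 < m) : t ^ m ≠ -1 := by
  simpa using t_pow_ne m hm (-1)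

variable {ε : RatFunc ℚ} (hε : ε = 1 ∨ ε = -1)

include hε

lemma hε0 : ε ≠ 0 := by rcases hε with rfl | rfl <;> norm_num

lemma hεt0 : ε * t ≠ 0 := mul_ne_zero (hε0 hε) ht0

lemma num_ne (n : ℤ) (hn : 1 ≤ n) : (ε * t) ^ n - t ^ (-n) ≠ 0 := by
  obtain ⟨k, rfl⟩ : ∃ k : ℕ, n = (k : ℤ) := ⟨n.toNat, (Int.toNat_of_nonneg (by omega)).symm⟩
  have hk : 0 < k := by exact_mod_cast hn
  intro h
  have h2 : (ε * t) ^ k * t ^ k = 1 := by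
    have := sub_eq_zero.mp h
    rw [zpow_natCast] at this
    rw [this]
    rw [← zpow_natCast t k, ← zpow_add₀ ht0]
    simp
  rw [mul_pow] at h2
  have h3 : ε ^ k * t ^ (k + k) = 1 := by rw [pow_add]; linear_combination h2
  rcases hε with rfl | rfl
  · rw [one_pow, one_mul] at h3
    exact t_pow_ne_one (k + k) (by omega) h3
  · rcases Nat.even_or_odd k with he | ho
    · rw [he.neg_one_pow, one_mul] at h3
      exact t_pow_ne_one (k + k) (by omega) h3
    · rw [ho.neg_one_pow] at h3
      have : t ^ (k + k) = -1 := by linear_combination -h3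
      exact t_pow_ne_neg_one (k + k) (by omega) this

lemma hd : ε * t - t ^ (-1 : ℤ) ≠ 0 := by simpa using num_ne hε 1 le_rfl

def fint (ε : RatFunc ℚ) (n : ℤ) : RatFunc ℚ :=
  ((ε * t) ^ n - t ^ (-n)) / (ε * t - t ^ (-1 : ℤ))

def ffact (ε : RatFunc ℚ) (n : ℕ) : RatFunc ℚ := ∏ i ∈ Finset.range n, fint ε ((i : ℤ) + 1)

def fb (ε : RatFunc ℚ) (n : ℤ) (r : ℕ) : RatFunc ℚ :=
  (∏ i ∈ Finset.range r, fint ε (n - (i : ℤ))) / ffact ε r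

lemma fint_ne_zero (n : ℤ) (hn : 1 ≤ n) : fint ε n ≠ 0 :=
  div_ne_zero (num_ne hε n hn) (hd hε)

omit hε in
lemma fint_zero : fint ε 0 = 0 := by simp [fint]

lemma fint_add (a b : ℤ) : fint ε (a + b) = (ε * t) ^ b * fint ε a + t ^ (-a) * fint ε b := by
  unfold fint
  rw [← mul_div_assoc, ← mul_div_assoc, ← add_div]
  congr 1
  rw [zpow_add₀ (hεt0 hε), neg_add, zpow_add₀ ht0]
  ring

omit hε in
lemma ffact_succ (r : ℕ) : ffact ε (r + 1) = ffact ε r * fint ε ((r : ℤ) + 1) := by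
  simp [ffact, Finset.prod_range_succ]

lemma ffact_ne_zero (r : ℕ) : ffact ε r ≠ 0 := by
  refine Finset.prod_ne_zero_iff.mpr fun i _ => fint_ne_zero hε _ (by omega)

-- fb n (r+1) = fb n r * fint (n - r) / fint (r+1)
omit hε in
lemma fb_succ_right (n : ℤ) (r : ℕ) :
    fb ε n (r + 1) = fb ε n r * fint ε (n - (r : ℤ)) / fint ε ((r : ℤ) + 1) := by
  unfold fb
  rw [Finset.prod_range_succ, ffact_succ]
  rw [div_mul_eq_mul_div, div_div]

omit hε in
lemma fb_succ_left (n : ℤ) (r : ℕ) :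
    fb ε n (r + 1) = fint ε n / fint ε ((r : ℤ) + 1) * fb ε (n - 1) r := by
  unfold fb
  rw [Finset.prod_range_succ', ffact_succ]
  push_cast
  have : ∀ i : ℕ, n - ((i : ℤ) + 1) = n - 1 - (i : ℤ) := fun i => by ring
  simp only [this, Nat.cast_zero, sub_zero]
  rw [div_mul_eq_mul_div, mul_comm, mul_div_assoc, mul_div_assoc, div_div]

lemma pascal (m r : ℕ) :
    fb ε ((m : ℤ) + (r : ℤ) + 1) (r + 1) =
      (ε * t) ^ (m : ℤ) * fb ε ((m : ℤ) + (r : ℤ)) r +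
        t ^ (-((r : ℤ) + 1)) * fb ε ((m : ℤ) + (r : ℤ)) (r + 1) := by
  have h1 : fb ε ((m : ℤ) + (r : ℤ) + 1) (r + 1) =
      fint ε ((m : ℤ) + (r : ℤ) + 1) / fint ε ((r : ℤ) + 1) * fb ε ((m : ℤ) + (r : ℤ)) r := by
    rw [fb_succ_left]
    norm_num
  have h2 : fint ε ((m : ℤ) + (r : ℤ) + 1) =
      (ε * t) ^ (m : ℤ) * fint ε ((r : ℤ) + 1) + t ^ (-((r : ℤ) + 1)) * fint ε (m : ℤ) := by
    have := fint_add hε ((r : ℤ) + 1) (m : ℤ)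
    rw [show ((r : ℤ) + 1 + (m : ℤ)) = (m : ℤ) + (r : ℤ) + 1 by ring] at this
    exact this
  have h3 : fb ε ((m : ℤ) + (r : ℤ)) (r + 1) =
      fb ε ((m : ℤ) + (r : ℤ)) r * fint ε (m : ℤ) / fint ε ((r : ℤ) + 1) := by
    rw [fb_succ_right]
    norm_num
  rw [h1, h2, h3]
  have h4 : fint ε ((r : ℤ) + 1) ≠ 0 := fint_ne_zero hε _ (by omega)
  field_simp

lemma main (m r : ℕ) :
    t ^ ((m : ℤ) * (r : ℤ)) * fb ε ((m : ℤ) + (r : ℤ)) r =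
      ∑ s ∈ Finset.range (r + 1),
        (ε * t ^ 2) ^ ((m : ℤ) * ((r : ℤ) - (s : ℤ))) * t ^ (((m : ℤ) - 1) * (s : ℤ)) *
          fb ε ((m : ℤ) + (s : ℤ) - 1) s := by
  induction r with
  | zero => simp [fb, ffact]
  | succ r ih =>
    have hq2 : ε * t ^ 2 ≠ 0 := mul_ne_zero (hε0 hε) (pow_ne_zero 2 ht0)
    rw [Finset.sum_range_succ]
    have step : ∀ s ∈ Finset.range (r + 1),
        (ε * t ^ 2) ^ ((m : ℤ) * (((r + 1 : ℕ) : ℤ) - (s : ℤ))) * t ^ (((m : ℤ) - 1) * (s : ℤ)) *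
          fb ε ((m : ℤ) + (s : ℤ) - 1) s =
        (ε * t ^ 2) ^ ((m : ℤ)) *
          ((ε * t ^ 2) ^ ((m : ℤ) * ((r : ℤ) - (s : ℤ))) * t ^ (((m : ℤ) - 1) * (s : ℤ)) *
            fb ε ((m : ℤ) + (s : ℤ) - 1) s) := by
      intro s _
      rw [show (m : ℤ) * (((r + 1 : ℕ) : ℤ) - (s : ℤ)) = (m : ℤ) + (m : ℤ) * ((r : ℤ) - (s : ℤ))
        by push_cast; ring, zpow_add₀ hq2]
      ring
    rw [Finset.sum_congr rfl step, ← Finset.mul_sum, ← ih]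
    rw [show (m : ℤ) * (((r + 1 : ℕ) : ℤ) - ((r + 1 : ℕ) : ℤ)) = 0 by ring, zpow_zero, one_mul]
    rw [show (m : ℤ) + ((r + 1 : ℕ) : ℤ) - 1 = (m : ℤ) + (r : ℤ) by push_cast; ring]
    rw [show (m : ℤ) + ((r + 1 : ℕ) : ℤ) = (m : ℤ) + (r : ℤ) + 1 by push_cast; ring]
    rw [pascal hε m r]
    have e4 : (ε * t) ^ (m : ℤ) = ε ^ (m : ℤ) * t ^ (m : ℤ) := mul_zpow ..
    have e3 : (ε * t ^ 2) ^ (m : ℤ) = ε ^ (m : ℤ) * t ^ (2 * (m : ℤ)) := by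
      rw [mul_zpow, ← zpow_natCast t 2, ← zpow_mul]
      norm_num
    have E1 : t ^ ((m : ℤ) * (((r + 1 : ℕ) : ℤ))) * t ^ ((m : ℤ)) =
        t ^ (2 * (m : ℤ)) * t ^ ((m : ℤ) * (r : ℤ)) := by
      rw [← zpow_add₀ ht0, ← zpow_add₀ ht0]; congr 1; push_cast; ring
    have E2 : t ^ ((m : ℤ) * (((r + 1 : ℕ) : ℤ))) * t ^ (-((r : ℤ) + 1)) =
        t ^ (((m : ℤ) - 1) * (((r + 1 : ℕ) : ℤ))) := by
      rw [← zpow_add₀ ht0]; congr 1; push_cast; ring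
    rw [e4, e3]
    linear_combination (ε ^ (m : ℤ) * fb ε ((m : ℤ) + (r : ℤ)) r) * E1 +
      fb ε ((m : ℤ) + (r : ℤ)) (r + 1) * E2

lemma mainN (n r : ℕ) (hrn : r ≤ n) :
    t ^ (((n : ℤ) - (r : ℤ)) * (r : ℤ)) * fb ε (n : ℤ) r =
      ∑ s ∈ Finset.range (r + 1),
        (ε * t ^ 2) ^ (((n : ℤ) - (r : ℤ)) * ((r : ℤ) - (s : ℤ))) *
          t ^ (((n : ℤ) - (r : ℤ) - 1) * (s : ℤ)) *
          fb ε ((n : ℤ) - (r : ℤ) + (s : ℤ) - 1) s := by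
  obtain ⟨m, rfl⟩ := Nat.exists_eq_add_of_le hrn
  have eq1 : ((r + m : ℕ) : ℤ) = (m : ℤ) + (r : ℤ) := by push_cast; ring
  have eq2 : (m : ℤ) + (r : ℤ) - (r : ℤ) = (m : ℤ) := by ring
  simp only [eq1, eq2]
  exact main hε m r

omit hε in
lemma qint_fst (n : ℤ) : (qint n).1 = fint 1 n := rfl

omit hε in
lemma qint_snd (n : ℤ) : (qint n).2 = fint (-1) n := rfl

omit hε in
lemma qbinom_fst (n : ℤ) (r : ℕ) : (qbinom n (r : ℤ)).1 = fb 1 n r := by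
  rw [qbinom, if_neg (by omega), Int.toNat_natCast]
  show (∏ i ∈ Finset.range r, qint (n - (i : ℤ))).1 / (qfact r).1 = _
  rw [fb, ffact, qfact, Prod.fst_prod, Prod.fst_prod]
  simp only [qint_fst]

omit hε in
lemma qbinom_snd (n : ℤ) (r : ℕ) : (qbinom n (r : ℤ)).2 = fb (-1) n r := by
  rw [qbinom, if_neg (by omega), Int.toNat_natCast]
  show (∏ i ∈ Finset.range r, qint (n - (i : ℤ))).2 / (qfact r).2 = _
  rw [fb, ffact, qfact, Prod.snd_prod, Prod.snd_prod]
  simp only [qint_snd]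

end St6

/-- For `0 ≤ r ≤ n`:
`q^{(n-r)r} [n choose r] = ∑_{s=0}^{r} (πq²)^{(n-r)(r-s)} q^{(n-r-1)s} [n-r+s-1 choose s]`. -/
theorem statement6 (n r : ℕ) (hrn : r ≤ n) :
    qv ^ (((n : ℤ) - (r : ℤ)) * (r : ℤ)) * qbinom (n : ℤ) (r : ℤ) =
      ∑ s ∈ Finset.range (r + 1),
        (piv * qv ^ 2) ^ (((n : ℤ) - (r : ℤ)) * ((r : ℤ) - (s : ℤ))) *
          qv ^ (((n : ℤ) - (r : ℤ) - 1) * (s : ℤ)) *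
          qbinom ((n : ℤ) - (r : ℤ) + (s : ℤ) - 1) (s : ℤ) := by
  refine Prod.ext ?_ ?_
  · have H := St6.mainN (ε := 1) (Or.inl rfl) n r hrn
    have hz : ∀ (a : Rqpi) (z : ℤ), (a ^ z).1 = a.1 ^ z := fun _ _ => rfl
    simp only [Prod.fst_mul, Prod.fst_sum, hz, St6.qbinom_fst]
    exact H
  · have H := St6.mainN (ε := -1) (Or.inr rfl) n r hrn
    have hz : ∀ (a : Rqpi) (z : ℤ), (a ^ z).2 = a.2 ^ z := fun _ _ => rfl
    simp only [Prod.snd_mul, Prod.snd_sum, hz, St6.qbinom_snd]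
    exact H
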